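/- Let p > 3 be a prime and let G = Φ₂₃(1⁶) be the group of order p⁶ with presentation on generators α, α₁, α₂, α₃, α₄, γ and relations [αᵢ,α] = αᵢ₊₁ for i = 1,2,3, [α₁,α₂] = γ, αᵖ = 1, γᵖ = 1, and αⱼ^(p) = 1 for j = 1,2,3,4, where αⱼ^(p) denotes αⱼᵖ·αⱼ₊₁^C(p,2)·αⱼ₊₂^C(p,3)·⋯·α₄^C(p,5−j); every commutator of a pair of generators not listed among these relations is declared trivial. Then the Bogomolov multiplier B₀(G) is trivial. -/

import Mathlib

/-!
Φ₂₃(1⁶): relations [αᵢ,α]=αᵢ₊₁ (i=1,2,3), [α₁,α₂]=γ, αᵖ=γᵖ=1, αⱼ^(p)=1 (j=1..4).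
-/

namespace Stmt3

/-- The additive group `ℚ/ℤ`. -/
abbrev QZ : Type := ℚ ⧸ AddSubgroup.zmultiples (1 : ℚ)

/-- An inhomogeneous 2-cocycle on `G` with values in `ℚ/ℤ` (trivial `G`-action). -/
def IsTwoCocycle {G : Type} [Group G] (f : G → G → QZ) : Prop :=
  ∀ g h j : G, f h j - f (g * h) j + f g (h * j) - f g h = 0

/-- An inhomogeneous 2-coboundary on `G` with values in `ℚ/ℤ` (trivial `G`-action). -/
def IsTwoCoboundary {G : Type} [Group G] (f : G → G → QZ) : Prop :=
  ∃ c : G → QZ, ∀ g h : G, f g h = c h - c (g * h) + c g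

/-- A subgroup is bicyclic if it is abelian and generated by at most two elements
(equivalently, cyclic or a direct product of two cyclic groups). -/
def IsBicyclic {G : Type} [Group G] (A : Subgroup G) : Prop :=
  (∀ x y : A, x * y = y * x) ∧ ∃ a b : G, A = Subgroup.closure {a, b}

/-- The Bogomolov multiplier `B₀(G) ⊆ H²(G, ℚ/ℤ)` is trivial, phrased at the level of
2-cocycles: every 2-cocycle whose restriction to each bicyclic subgroup is a coboundary
(i.e. whose class restricts to zero on each bicyclic subgroup) is itself a coboundary
(i.e. its class is zero). -/
def BogomolovMultiplierIsTrivial (G : Type) [Group G] : Prop :=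
  ∀ f : G → G → QZ, IsTwoCocycle f →
    (∀ A : Subgroup G, IsBicyclic A → IsTwoCoboundary (fun a b : ↥A => f ↑a ↑b)) →
    IsTwoCoboundary f

/-- The Bogomolov multiplier `B₀(G) ⊆ H²(G, ℚ/ℤ)` is nontrivial, phrased at the level of
2-cocycles. -/
def BogomolovMultiplierIsNontrivial (G : Type) [Group G] : Prop :=
  ∃ f : G → G → QZ, IsTwoCocycle f ∧
    (∀ A : Subgroup G, IsBicyclic A → IsTwoCoboundary (fun a b : ↥A => f ↑a ↑b)) ∧
    ¬ IsTwoCoboundary f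

/-- The generators. -/
inductive Gen | a | a1 | a2 | a3 | a4 | g

open FreeGroup

/-- The commutator `[x,y] = x⁻¹y⁻¹xy`. -/
def c (x y : FreeGroup Gen) : FreeGroup Gen := x⁻¹ * y⁻¹ * x * y

/-- The defining relators. -/
def rels (p : ℕ) : Set (FreeGroup Gen) :=
  { c (of .a1) (of .a) * (of Gen.a2)⁻¹,
    c (of .a2) (of .a) * (of Gen.a3)⁻¹,
    c (of .a3) (of .a) * (of Gen.a4)⁻¹,
    c (of .a1) (of .a2) * (of Gen.g)⁻¹,
    c (of .a) (of .a4),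
    c (of .a) (of .g),
    c (of .a1) (of .a3),
    c (of .a1) (of .a4),
    c (of .a1) (of .g),
    c (of .a2) (of .a3),
    c (of .a2) (of .a4),
    c (of .a2) (of .g),
    c (of .a3) (of .a4),
    c (of .a3) (of .g),
    c (of .a4) (of .g),
    (of Gen.a) ^ p,
    (of Gen.g) ^ p,
    (of Gen.a1) ^ p * (of Gen.a2) ^ (p.choose 2) * (of Gen.a3) ^ (p.choose 3) * (of Gen.a4) ^ (p.choose 4),
    (of Gen.a2) ^ p * (of Gen.a3) ^ (p.choose 2) * (of Gen.a4) ^ (p.choose 3),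
    (of Gen.a3) ^ p * (of Gen.a4) ^ (p.choose 2),
    (of Gen.a4) ^ p }


/-! ### Auxiliary machinery -/


section Kom
variable {E : Type*} [Group E]

/-- commutator convention of the problem -/
def kom (x y : E) : E := x⁻¹ * y⁻¹ * x * y

lemma kom_eq_one {x y : E} (h : x * y = y * x) : kom x y = 1 := by
  unfold kom
  rw [mul_assoc (x⁻¹ * y⁻¹) x y, h]
  group

lemma mul_comm_of_kom {x y : E} (h : kom x y = 1) : x * y = y * x := by
  have : y * x * kom x y = x * y := by unfold kom; group
  rw [h, mul_one] at this; exact this.symm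

lemma kom_mul_right (x u v : E) : kom x (u * v) = kom x v * (v⁻¹ * kom x u * v) := by
  unfold kom; group

lemma kom_mul_left (u v y : E) : kom (u * v) y = (v⁻¹ * kom u y * v) * kom v y := by
  unfold kom; group

lemma kom_one_left (y : E) : kom 1 y = 1 := by unfold kom; group

lemma kom_central_one {z : E} (hz : ∀ w, z * w = w * z) (y : E) : kom z y = 1 :=
  kom_eq_one (hz y)

lemma kom_central_one' {z : E} (hz : ∀ w, z * w = w * z) (x : E) : kom x z = 1 :=
  kom_eq_one (hz x).symm

lemma kom_central_left {z : E} (hz : ∀ w, z * w = w * z) (x y : E) :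
    kom (z * x) y = kom x y := by
  rw [kom_mul_left, kom_central_one hz]
  group

lemma kom_central_right {z : E} (hz : ∀ w, z * w = w * z) (x y : E) :
    kom x (z * y) = kom x y := by
  rw [kom_mul_right, kom_central_one' hz]
  group

end Kom



section Kom2
variable {E : Type*} [Group E]

lemma kom_one_right (x : E) : kom x 1 = 1 := by unfold kom; group

lemma conj_mul (y u v : E) : y⁻¹ * (u * v) * y = (y⁻¹ * u * y) * (y⁻¹ * v * y) := by group

lemma conj_pow (y u : E) (n : ℕ) : y⁻¹ * u ^ n * y = (y⁻¹ * u * y) ^ n := by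
  induction n with
  | zero => group
  | succ n ih => rw [pow_succ, pow_succ, conj_mul, ih]

/-- Hall-type expansion of `[x, yⁿ]` in a situation of class ≤ 3 above `x`. -/
lemma kom_pow_right (x y d e g4 : E) (hd : kom x y = d) (he : kom d y = e) (hg : kom e y = g4)
    (hgc : ∀ w : E, g4 * w = w * g4) (hde : d * e = e * d) :
    ∀ n : ℕ, kom x (y ^ n) = d ^ n * e ^ (n.choose 2) * g4 ^ (n.choose 3) := by
  have hcd : y⁻¹ * d * y = d * e := by rw [← he]; unfold kom; group
  have hce : y⁻¹ * e * y = e * g4 := by rw [← hg]; unfold kom; group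
  have hcg : y⁻¹ * g4 * y = g4 := by rw [← hgc y⁻¹]; group
  have cde : Commute d e := hde
  have ceg : Commute e g4 := (hgc e).symm
  intro n
  induction n with
  | zero => simp [kom_one_right]
  | succ n ih =>
    rw [pow_succ, kom_mul_right, hd, ih, conj_mul, conj_mul, conj_pow, conj_pow, conj_pow,
      hcd, hce, hcg, cde.mul_pow, ceg.mul_pow,
      Nat.choose_succ_succ n 1, Nat.choose_succ_succ n 2, Nat.choose_one_right,
      pow_succ' d n, pow_add e n (n.choose 2), pow_add g4 (n.choose 2) (n.choose 3)]
    simp only [mul_assoc]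

lemma kom_pow_left (x y : E) (hc : ∀ w : E, kom x y * w = w * kom x y) :
    ∀ n : ℕ, kom (x ^ n) y = (kom x y) ^ n := by
  intro n
  induction n with
  | zero => simp [kom_one_left]
  | succ n ih =>
    have hcn : ∀ w : E, (kom x y) ^ n * w = w * (kom x y) ^ n := by
      intro w
      have hcw : Commute (kom x y) w := hc w
      exact hcw.pow_left n
    rw [pow_succ, kom_mul_left, ih, mul_assoc x⁻¹ _ x, hcn x, pow_succ]
    group

/-- The subgroup generated by two commuting elements is abelian. -/
lemma closure_pair_comm {G : Type*} [Group G] {a b : G} (h : a * b = b * a) :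
    ∀ x y : Subgroup.closure ({a, b} : Set G), x * y = y * x := by
  have key : ∀ x ∈ Subgroup.closure ({a, b} : Set G),
      ∀ y ∈ Subgroup.closure ({a, b} : Set G), Commute x y := by
    have gen : ∀ s ∈ ({a, b} : Set G), ∀ y ∈ Subgroup.closure ({a, b} : Set G),
        Commute s y := by
      intro s hs y hy
      induction hy using Subgroup.closure_induction with
      | mem t ht =>
        rcases hs with rfl | hs <;> rcases ht with rfl | ht
        · exact Commute.refl _
        · rw [Set.mem_singleton_iff] at ht; subst ht; exact h
        · rw [Set.mem_singleton_iff] at hs; subst hs; exact h.symm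
        · rw [Set.mem_singleton_iff] at hs ht; subst hs; subst ht; exact Commute.refl _
      | one => exact Commute.one_right _
      | mul u v _ _ hu hv => exact Commute.mul_right hu hv
      | inv u _ hu => exact Commute.inv_right hu
    intro x hx
    induction hx using Subgroup.closure_induction with
    | mem t ht => exact gen t ht
    | one => exact fun y _ => Commute.one_left _
    | mul u v _ _ hu hv => exact fun y hy => Commute.mul_left (hu y hy) (hv y hy)
    | inv u _ hu => exact fun y hy => Commute.inv_left (hu y hy)
  intro x y
  exact Subtype.ext (key x x.2 y y.2)
end Kom2


lemma kom_inv {E : Type*} [Group E] (x y : E) : (kom x y)⁻¹ = kom y x := by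
  unfold kom; group


lemma qz_div (n : ℕ) (hn : (n:ℚ) ≠ 0) (w : QZ) : ∃ u : QZ, n • u = w := by
  obtain ⟨q, rfl⟩ := QuotientAddGroup.mk_surjective w
  refine ⟨QuotientAddGroup.mk (q / n), ?_⟩
  rw [← QuotientAddGroup.mk_nsmul]
  congr 1
  rw [nsmul_eq_mul]; field_simp

section ExtSec
variable {G : Type} [Group G] (f : G → G → QZ) (hf : IsTwoCocycle f)

lemma f_one_left (hf : IsTwoCocycle f) (j : G) : f 1 j = f 1 1 := by
  have h := hf 1 1 j
  rw [← sub_eq_zero, show f 1 j - f 1 1 = f 1 j - f (1*1) j + f 1 (1*j) - f 1 1 from by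
    rw [one_mul, one_mul]; abel]
  exact h

lemma f_one_right (hf : IsTwoCocycle f) (g : G) : f g 1 = f 1 1 := by
  have h := hf g 1 1
  rw [← sub_eq_zero, show f g 1 - f 1 1
    = -(f 1 1 - f (g*1) 1 + f g (1*1) - f g 1) from by rw [mul_one, one_mul]; abel,
    h, neg_zero]

/-- The central extension of `G` by `ℚ/ℤ` determined by the 2-cocycle `f`. -/
structure Ext (f : G → G → QZ) (hf : IsTwoCocycle f) where
  g : G
  u : QZ

instance : Group (Ext f hf) where
  mul x y := ⟨x.g * y.g, x.u + y.u + f x.g y.g⟩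
  one := ⟨1, - f 1 1⟩
  inv x := ⟨x.g⁻¹, - x.u - f x.g⁻¹ x.g - f 1 1⟩
  mul_assoc a b c := by
    have h := hf a.g b.g c.g
    show (⟨(a.g*b.g)*c.g, (a.u+b.u+f a.g b.g)+c.u+f (a.g*b.g) c.g⟩ : Ext f hf) = _
    show _ = (⟨a.g*(b.g*c.g), a.u+(b.u+c.u+f b.g c.g)+f a.g (b.g*c.g)⟩ : Ext f hf)
    rw [mul_assoc]
    congr 1
    rw [← sub_eq_zero, show (a.u+b.u+f a.g b.g)+c.u+f (a.g*b.g) c.g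
      - (a.u+(b.u+c.u+f b.g c.g)+f a.g (b.g*c.g))
      = -(f b.g c.g - f (a.g*b.g) c.g + f a.g (b.g*c.g) - f a.g b.g) from by abel,
      h, neg_zero]
  one_mul a := by
    show (⟨1 * a.g, -f 1 1 + a.u + f 1 a.g⟩ : Ext f hf) = a
    rw [f_one_left f hf a.g, one_mul]
    congr 1
    abel
  mul_one a := by
    show (⟨a.g * 1, a.u + -f 1 1 + f a.g 1⟩ : Ext f hf) = a
    rw [f_one_right f hf a.g, mul_one]
    congr 1
    abel
  inv_mul_cancel a := by
    show (⟨a.g⁻¹ * a.g, (- a.u - f a.g⁻¹ a.g - f 1 1) + a.u + f a.g⁻¹ a.g⟩ : Ext f hf)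
      = (⟨1, - f 1 1⟩ : Ext f hf)
    rw [inv_mul_cancel]
    congr 1
    abel

variable {f hf} in
lemma Ext.ext' {x y : Ext f hf} (h1 : x.g = y.g) (h2 : x.u = y.u) : x = y := by
  cases x; cases y; cases h1; cases h2; rfl

lemma ext_mul_g (x y : Ext f hf) : (x * y).g = x.g * y.g := rfl
lemma ext_mul_u (x y : Ext f hf) : (x * y).u = x.u + y.u + f x.g y.g := rfl
lemma ext_one_g : (1 : Ext f hf).g = 1 := rfl
lemma ext_one_u : (1 : Ext f hf).u = - f 1 1 := rfl

/-- Projection onto `G`. -/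
def extPi : Ext f hf →* G := ⟨⟨Ext.g, rfl⟩, fun _ _ => rfl⟩

lemma extPi_apply (x : Ext f hf) : extPi f hf x = x.g := rfl

/-- The central embedding of `ℚ/ℤ`. -/
def zeta (v : QZ) : Ext f hf := ⟨1, v - f 1 1⟩

lemma zeta_central (v : QZ) (x : Ext f hf) : zeta f hf v * x = x * zeta f hf v := by
  refine Ext.ext' ?_ ?_
  · show 1 * x.g = x.g * 1; rw [one_mul, mul_one]
  · show (v - f 1 1) + x.u + f 1 x.g = x.u + (v - f 1 1) + f x.g 1
    rw [f_one_left f hf x.g, f_one_right f hf x.g]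
    abel

lemma zeta_add (v w : QZ) : zeta f hf (v + w) = zeta f hf v * zeta f hf w := by
  refine Ext.ext' ?_ ?_
  · show (1 : G) = 1 * 1; rw [one_mul]
  · show v + w - f 1 1 = (v - f 1 1) + (w - f 1 1) + f 1 1
    rw [f_one_left f hf]
    abel

lemma zeta_zero : zeta f hf 0 = 1 := by
  refine Ext.ext' rfl ?_
  show (0 : QZ) - f 1 1 = - f 1 1
  abel

lemma zeta_pow (v : QZ) (n : ℕ) : (zeta f hf v) ^ n = zeta f hf (n • v) := by
  induction n with
  | zero => rw [pow_zero, zero_smul, zeta_zero]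
  | succ n ih => rw [pow_succ, ih, ← zeta_add, succ_nsmul]

lemma fst_one_eq_zeta (x : Ext f hf) (h : x.g = 1) : x = zeta f hf (x.u + f 1 1) := by
  refine Ext.ext' h ?_
  show x.u = x.u + f 1 1 - f 1 1
  abel

lemma zeta_mul_pow (v : QZ) (x : Ext f hf) (n : ℕ) :
    (zeta f hf v * x) ^ n = zeta f hf (n • v) * x ^ n := by
  have hc : Commute (zeta f hf v) x := zeta_central f hf v x
  rw [hc.mul_pow, zeta_pow]

end ExtSec

section ExtComm
variable {G : Type} [Group G] (f : G → G → QZ) (hf : IsTwoCocycle f)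

/-- Key lemma: if the restriction of `f` to every bicyclic subgroup is a coboundary,
then any two lifts of commuting elements of `G` commute in the extension. -/
lemma ext_comm (hbi : ∀ A : Subgroup G, IsBicyclic A →
      IsTwoCoboundary (fun a b : ↥A => f ↑a ↑b))
    (X Y : Ext f hf) (h : X.g * Y.g = Y.g * X.g) : X * Y = Y * X := by
  set A := Subgroup.closure ({X.g, Y.g} : Set G) with hA
  have habel : ∀ x y : A, x * y = y * x := closure_pair_comm h
  obtain ⟨cb, hcb⟩ := hbi A ⟨habel, X.g, Y.g, rfl⟩
  let t : A → Ext f hf := fun a => ⟨(a : G), - cb a⟩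
  have ht : ∀ a b : A, t a * t b = t (a * b) := by
    intro a b
    refine Ext.ext' rfl ?_
    show - cb a + - cb b + f (a : G) (b : G) = - cb (a * b)
    have := hcb a b
    simp only at this
    rw [this]
    abel
  have hmemX : X.g ∈ A := Subgroup.subset_closure (Set.mem_insert _ _)
  have hmemY : Y.g ∈ A := Subgroup.subset_closure (Set.mem_insert_of_mem _ rfl)
  have decomp : ∀ (Z : Ext f hf) (hZ : Z.g ∈ A),
      Z = zeta f hf (Z.u + cb ⟨Z.g, hZ⟩) * t ⟨Z.g, hZ⟩ := by
    intro Z hZ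
    refine Ext.ext' ?_ ?_
    · show Z.g = 1 * Z.g
      rw [one_mul]
    · show Z.u = (Z.u + cb ⟨Z.g, hZ⟩ - f 1 1) + (- cb ⟨Z.g, hZ⟩) + f 1 Z.g
      rw [f_one_left f hf Z.g]
      abel
  have key : ∀ (v w : QZ) (a b : A),
      (zeta f hf v * t a) * (zeta f hf w * t b) = zeta f hf (v + w) * t (a * b) := by
    intro v w a b
    rw [zeta_add]
    calc (zeta f hf v * t a) * (zeta f hf w * t b)
        = zeta f hf v * ((t a * zeta f hf w) * t b) := by
          simp only [mul_assoc]
      _ = zeta f hf v * ((zeta f hf w * t a) * t b) := by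
          rw [← zeta_central f hf w (t a)]
      _ = (zeta f hf v * zeta f hf w) * (t a * t b) := by
          simp only [mul_assoc]
      _ = zeta f hf v * zeta f hf w * t (a * b) := by rw [ht]
  rw [decomp X hmemX, decomp Y hmemY, key, key, habel ⟨X.g, hmemX⟩ ⟨Y.g, hmemY⟩, add_comm]

end ExtComm

section MainProof

variable (p : ℕ)

local notation "Gp" => PresentedGroup (rels p)

open PresentedGroup in
lemma mk_rel_one {r : FreeGroup Gen} (hr : r ∈ rels p) :
    PresentedGroup.mk (rels p) r = 1 := by
  rw [PresentedGroup.mk_eq_one_iff]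
  exact Subgroup.subset_normalClosure hr

lemma mk_c (x y : FreeGroup Gen) :
    PresentedGroup.mk (rels p) (c x y) = kom (PresentedGroup.mk (rels p) x)
      (PresentedGroup.mk (rels p) y) := by
  simp [c, kom, _root_.map_mul, _root_.map_inv]

/-- Extract the consequence `[x,y] = z` from a relator `c x y * z⁻¹ ∈ rels p`. -/
lemma kom_of_rel {x y z : Gen} (hr : c (FreeGroup.of x) (FreeGroup.of y) * (FreeGroup.of z)⁻¹ ∈ rels p) :
    kom (PresentedGroup.of (rels := rels p) x) (PresentedGroup.of y) = PresentedGroup.of z := by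
  have h := mk_rel_one p hr
  rw [_root_.map_mul (PresentedGroup.mk (rels p)), _root_.map_inv (PresentedGroup.mk (rels p)),
    mk_c, mul_inv_eq_one] at h
  exact h

/-- Extract commutation from a trivial-commutator relator. -/
lemma comm_of_rel {x y : Gen} (hr : c (FreeGroup.of x) (FreeGroup.of y) ∈ rels p) :
    (PresentedGroup.of (rels := rels p) x) * PresentedGroup.of y
      = PresentedGroup.of y * PresentedGroup.of x := by
  have h := mk_rel_one p hr
  rw [mk_c] at h
  exact mul_comm_of_kom h

end MainProof

set_option maxHeartbeats 16000000 in
theorem bogomolov_trivial_Phi23 (p : ℕ) (hp : p.Prime) (h3 : 3 < p)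
    (hcard : Nat.card (PresentedGroup (rels p)) = p ^ 6) :
    BogomolovMultiplierIsTrivial (PresentedGroup (rels p)) := by
  intro f hf hbi
  classical
  -- notation for generators of G
  let oa : PresentedGroup (rels p) := PresentedGroup.of Gen.a
  let oa1 : PresentedGroup (rels p) := PresentedGroup.of Gen.a1
  let oa2 : PresentedGroup (rels p) := PresentedGroup.of Gen.a2
  let oa3 : PresentedGroup (rels p) := PresentedGroup.of Gen.a3
  let oa4 : PresentedGroup (rels p) := PresentedGroup.of Gen.a4
  let og : PresentedGroup (rels p) := PresentedGroup.of Gen.g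
  -- relator memberships
  have m1 : c (FreeGroup.of .a1) (FreeGroup.of .a) * (FreeGroup.of Gen.a2)⁻¹ ∈ rels p := (Set.mem_insert _ _)
  have m2 : c (FreeGroup.of .a2) (FreeGroup.of .a) * (FreeGroup.of Gen.a3)⁻¹ ∈ rels p := (Set.mem_insert_of_mem _ (Set.mem_insert _ _))
  have m3 : c (FreeGroup.of .a3) (FreeGroup.of .a) * (FreeGroup.of Gen.a4)⁻¹ ∈ rels p := (Set.mem_insert_of_mem _ (Set.mem_insert_of_mem _ (Set.mem_insert _ _)))
  have m4 : c (FreeGroup.of .a1) (FreeGroup.of .a2) * (FreeGroup.of Gen.g)⁻¹ ∈ rels p := (Set.mem_insert_of_mem _ (Set.mem_insert_of_mem _ (Set.mem_insert_of_mem _ (Set.mem_insert _ _))))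
  have m5 : c (FreeGroup.of .a) (FreeGroup.of .a4) ∈ rels p := (Set.mem_insert_of_mem _ (Set.mem_insert_of_mem _ (Set.mem_insert_of_mem _ (Set.mem_insert_of_mem _ (Set.mem_insert _ _)))))
  have m6 : c (FreeGroup.of .a) (FreeGroup.of .g) ∈ rels p := (Set.mem_insert_of_mem _ (Set.mem_insert_of_mem _ (Set.mem_insert_of_mem _ (Set.mem_insert_of_mem _ (Set.mem_insert_of_mem _ (Set.mem_insert _ _))))))
  have m7 : c (FreeGroup.of .a1) (FreeGroup.of .a3) ∈ rels p := (Set.mem_insert_of_mem _ (Set.mem_insert_of_mem _ (Set.mem_insert_of_mem _ (Set.mem_insert_of_mem _ (Set.mem_insert_of_mem _ (Set.mem_insert_of_mem _ (Set.mem_insert _ _)))))))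
  have m8 : c (FreeGroup.of .a1) (FreeGroup.of .a4) ∈ rels p := (Set.mem_insert_of_mem _ (Set.mem_insert_of_mem _ (Set.mem_insert_of_mem _ (Set.mem_insert_of_mem _ (Set.mem_insert_of_mem _ (Set.mem_insert_of_mem _ (Set.mem_insert_of_mem _ (Set.mem_insert _ _))))))))
  have m9 : c (FreeGroup.of .a1) (FreeGroup.of .g) ∈ rels p := (Set.mem_insert_of_mem _ (Set.mem_insert_of_mem _ (Set.mem_insert_of_mem _ (Set.mem_insert_of_mem _ (Set.mem_insert_of_mem _ (Set.mem_insert_of_mem _ (Set.mem_insert_of_mem _ (Set.mem_insert_of_mem _ (Set.mem_insert _ _)))))))))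
  have m10 : c (FreeGroup.of .a2) (FreeGroup.of .a3) ∈ rels p := (Set.mem_insert_of_mem _ (Set.mem_insert_of_mem _ (Set.mem_insert_of_mem _ (Set.mem_insert_of_mem _ (Set.mem_insert_of_mem _ (Set.mem_insert_of_mem _ (Set.mem_insert_of_mem _ (Set.mem_insert_of_mem _ (Set.mem_insert_of_mem _ (Set.mem_insert _ _))))))))))
  have m11 : c (FreeGroup.of .a2) (FreeGroup.of .a4) ∈ rels p := (Set.mem_insert_of_mem _ (Set.mem_insert_of_mem _ (Set.mem_insert_of_mem _ (Set.mem_insert_of_mem _ (Set.mem_insert_of_mem _ (Set.mem_insert_of_mem _ (Set.mem_insert_of_mem _ (Set.mem_insert_of_mem _ (Set.mem_insert_of_mem _ (Set.mem_insert_of_mem _ (Set.mem_insert _ _)))))))))))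
  have m12 : c (FreeGroup.of .a2) (FreeGroup.of .g) ∈ rels p := (Set.mem_insert_of_mem _ (Set.mem_insert_of_mem _ (Set.mem_insert_of_mem _ (Set.mem_insert_of_mem _ (Set.mem_insert_of_mem _ (Set.mem_insert_of_mem _ (Set.mem_insert_of_mem _ (Set.mem_insert_of_mem _ (Set.mem_insert_of_mem _ (Set.mem_insert_of_mem _ (Set.mem_insert_of_mem _ (Set.mem_insert _ _))))))))))))
  have m13 : c (FreeGroup.of .a3) (FreeGroup.of .a4) ∈ rels p := (Set.mem_insert_of_mem _ (Set.mem_insert_of_mem _ (Set.mem_insert_of_mem _ (Set.mem_insert_of_mem _ (Set.mem_insert_of_mem _ (Set.mem_insert_of_mem _ (Set.mem_insert_of_mem _ (Set.mem_insert_of_mem _ (Set.mem_insert_of_mem _ (Set.mem_insert_of_mem _ (Set.mem_insert_of_mem _ (Set.mem_insert_of_mem _ (Set.mem_insert _ _)))))))))))))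
  have m14 : c (FreeGroup.of .a3) (FreeGroup.of .g) ∈ rels p := (Set.mem_insert_of_mem _ (Set.mem_insert_of_mem _ (Set.mem_insert_of_mem _ (Set.mem_insert_of_mem _ (Set.mem_insert_of_mem _ (Set.mem_insert_of_mem _ (Set.mem_insert_of_mem _ (Set.mem_insert_of_mem _ (Set.mem_insert_of_mem _ (Set.mem_insert_of_mem _ (Set.mem_insert_of_mem _ (Set.mem_insert_of_mem _ (Set.mem_insert_of_mem _ (Set.mem_insert _ _))))))))))))))
  have m15 : c (FreeGroup.of .a4) (FreeGroup.of .g) ∈ rels p := (Set.mem_insert_of_mem _ (Set.mem_insert_of_mem _ (Set.mem_insert_of_mem _ (Set.mem_insert_of_mem _ (Set.mem_insert_of_mem _ (Set.mem_insert_of_mem _ (Set.mem_insert_of_mem _ (Set.mem_insert_of_mem _ (Set.mem_insert_of_mem _ (Set.mem_insert_of_mem _ (Set.mem_insert_of_mem _ (Set.mem_insert_of_mem _ (Set.mem_insert_of_mem _ (Set.mem_insert_of_mem _ (Set.mem_insert _ _)))))))))))))))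
  have m16 : (FreeGroup.of Gen.a) ^ p ∈ rels p := (Set.mem_insert_of_mem _ (Set.mem_insert_of_mem _ (Set.mem_insert_of_mem _ (Set.mem_insert_of_mem _ (Set.mem_insert_of_mem _ (Set.mem_insert_of_mem _ (Set.mem_insert_of_mem _ (Set.mem_insert_of_mem _ (Set.mem_insert_of_mem _ (Set.mem_insert_of_mem _ (Set.mem_insert_of_mem _ (Set.mem_insert_of_mem _ (Set.mem_insert_of_mem _ (Set.mem_insert_of_mem _ (Set.mem_insert_of_mem _ (Set.mem_insert _ _))))))))))))))))
  have m17 : (FreeGroup.of Gen.g) ^ p ∈ rels p := (Set.mem_insert_of_mem _ (Set.mem_insert_of_mem _ (Set.mem_insert_of_mem _ (Set.mem_insert_of_mem _ (Set.mem_insert_of_mem _ (Set.mem_insert_of_mem _ (Set.mem_insert_of_mem _ (Set.mem_insert_of_mem _ (Set.mem_insert_of_mem _ (Set.mem_insert_of_mem _ (Set.mem_insert_of_mem _ (Set.mem_insert_of_mem _ (Set.mem_insert_of_mem _ (Set.mem_insert_of_mem _ (Set.mem_insert_of_mem _ (Set.mem_insert_of_mem _ (Set.mem_insert _ _)))))))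))))))))))
  have m18 : (FreeGroup.of Gen.a1) ^ p * (FreeGroup.of Gen.a2) ^ (p.choose 2) *
      (FreeGroup.of Gen.a3) ^ (p.choose 3) * (FreeGroup.of Gen.a4) ^ (p.choose 4) ∈ rels p := (Set.mem_insert_of_mem _ (Set.mem_insert_of_mem _ (Set.mem_insert_of_mem _ (Set.mem_insert_of_mem _ (Set.mem_insert_of_mem _ (Set.mem_insert_of_mem _ (Set.mem_insert_of_mem _ (Set.mem_insert_of_mem _ (Set.mem_insert_of_mem _ (Set.mem_insert_of_mem _ (Set.mem_insert_of_mem _ (Set.mem_insert_of_mem _ (Set.mem_insert_of_mem _ (Set.mem_insert_of_mem _ (Set.mem_insert_of_mem _ (Set.mem_insert_of_mem _ (Set.mem_insert_of_mem _ (Set.mem_insert _ _))))))))))))))))))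
  -- derived relations in G
  have gr1 : kom oa1 oa = oa2 := kom_of_rel p m1
  have gr2 : kom oa2 oa = oa3 := kom_of_rel p m2
  have gr3 : kom oa3 oa = oa4 := kom_of_rel p m3
  have gr4 : kom oa1 oa2 = og := kom_of_rel p m4
  have gc5 : oa * oa4 = oa4 * oa := comm_of_rel p m5
  have gc6 : oa * og = og * oa := comm_of_rel p m6
  have gc7 : oa1 * oa3 = oa3 * oa1 := comm_of_rel p m7
  have gc8 : oa1 * oa4 = oa4 * oa1 := comm_of_rel p m8
  have gc9 : oa1 * og = og * oa1 := comm_of_rel p m9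
  have gc10 : oa2 * oa3 = oa3 * oa2 := comm_of_rel p m10
  have gc11 : oa2 * oa4 = oa4 * oa2 := comm_of_rel p m11
  have gc12 : oa2 * og = og * oa2 := comm_of_rel p m12
  have gc13 : oa3 * oa4 = oa4 * oa3 := comm_of_rel p m13
  have gc14 : oa3 * og = og * oa3 := comm_of_rel p m14
  have gc15 : oa4 * og = og * oa4 := comm_of_rel p m15
  have gpa : oa ^ p = 1 := by
    have h := mk_rel_one p m16
    rw [_root_.map_pow (PresentedGroup.mk (rels p))] at h
    exact h
  have gr18 : oa1 ^ p * oa2 ^ (p.choose 2) * oa3 ^ (p.choose 3) * oa4 ^ (p.choose 4) = 1 := by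
    have h := mk_rel_one p m18
    rw [_root_.map_mul (PresentedGroup.mk (rels p)), _root_.map_mul (PresentedGroup.mk (rels p)),
      _root_.map_mul (PresentedGroup.mk (rels p)), _root_.map_pow (PresentedGroup.mk (rels p)),
      _root_.map_pow (PresentedGroup.mk (rels p)), _root_.map_pow (PresentedGroup.mk (rels p)),
      _root_.map_pow (PresentedGroup.mk (rels p))] at h
    exact h
  -- a4 and g are central in G
  have ha4c : ∀ x : PresentedGroup (rels p), oa4 * x = x * oa4 := by
    intro x
    have hx : x ∈ Subgroup.centralizer ({oa4} : Set (PresentedGroup (rels p))) := by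
      refine PresentedGroup.generated_by (rels p) _ ?_ x
      intro j
      rw [Subgroup.mem_centralizer_iff]
      rintro y (rfl : y = oa4)
      cases j with
      | a => exact gc5.symm
      | a1 => exact gc8.symm
      | a2 => exact gc11.symm
      | a3 => exact gc13.symm
      | a4 => rfl
      | g => exact gc15
    exact Subgroup.mem_centralizer_iff.mp hx oa4 rfl
  have hgc : ∀ x : PresentedGroup (rels p), og * x = x * og := by
    intro x
    have hx : x ∈ Subgroup.centralizer ({og} : Set (PresentedGroup (rels p))) := by
      refine PresentedGroup.generated_by (rels p) _ ?_ x
      intro j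
      rw [Subgroup.mem_centralizer_iff]
      rintro y (rfl : y = og)
      cases j with
      | a => exact gc6.symm
      | a1 => exact gc9.symm
      | a2 => exact gc12.symm
      | a3 => exact gc14.symm
      | a4 => exact gc15.symm
      | g => rfl
    exact Subgroup.mem_centralizer_iff.mp hx og rfl
  -- the extension E
  let E := Ext f hf
  let pi : E →* PresentedGroup (rels p) := extPi f hf
  -- the key consequence of the bicyclic hypothesis
  have K : ∀ X Y : E, X.g * Y.g = Y.g * X.g → X * Y = Y * X := by
    intro X Y h
    exact ext_comm f hf hbi X Y h
  -- lifts of the generators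
  let A0 : E := ⟨oa, 0⟩
  let B0 : E := ⟨oa1, 0⟩
  let B2 : E := kom B0 A0
  let B3 : E := kom B2 A0
  let B4 : E := kom B3 A0
  let CC : E := kom B0 B2
  have komg : ∀ X Y : E, (kom X Y).g = kom X.g Y.g := fun X Y => rfl
  have powg : ∀ (X : E) (n : ℕ), (X ^ n).g = X.g ^ n := fun X n => _root_.map_pow pi X n
  have hB2g : B2.g = oa2 := by rw [show B2.g = kom oa1 oa from rfl, gr1]
  have hB3g : B3.g = oa3 := by
    rw [show B3.g = kom B2.g oa from rfl, hB2g, gr2]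
  have hB4g : B4.g = oa4 := by
    rw [show B4.g = kom B3.g oa from rfl, hB3g, gr3]
  have hCCg : CC.g = og := by
    rw [show CC.g = kom oa1 B2.g from rfl, hB2g, gr4]
  -- centrality in E
  have hB4c : ∀ w : E, B4 * w = w * B4 := by
    intro w
    refine K B4 w ?_
    rw [hB4g]
    exact ha4c w.g
  have hCCc : ∀ w : E, CC * w = w * CC := by
    intro w
    refine K CC w ?_
    rw [hCCg]
    exact hgc w.g
  have h31 : B3 * B0 = B0 * B3 := by
    refine K B3 B0 ?_
    rw [hB3g]
    exact gc7.symm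
  have h32 : B3 * B2 = B2 * B3 := by
    refine K B3 B2 ?_
    rw [hB3g, hB2g]
    exact gc10.symm
  have hA0p : ∀ w : E, A0 ^ p * w = w * A0 ^ p := by
    intro w
    refine K (A0 ^ p) w ?_
    rw [powg A0 p, show A0.g = oa from rfl, gpa, one_mul, mul_one]
  have onec : ∀ w : E, (1 : E) * w = w * (1 : E) := fun w => by rw [one_mul, mul_one]
  -- the four key power identities
  have hB4p : B4 ^ p = 1 := by
    have h := kom_pow_right B3 A0 B4 1 1 rfl (kom_central_one hB4c A0) (kom_one_left A0)
      onec (by rw [mul_one, one_mul]) p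
    rw [kom_eq_one ((hA0p B3).symm), one_pow, one_pow, mul_one, mul_one] at h
    exact h.symm
  have hB3p : B3 ^ p * B4 ^ (p.choose 2) = 1 := by
    have h := kom_pow_right B2 A0 B3 B4 1 rfl rfl (kom_central_one hB4c A0)
      onec ((hB4c B3).symm) p
    rw [kom_eq_one ((hA0p B2).symm), one_pow, mul_one] at h
    exact h.symm
  have hB2p : B2 ^ p * B3 ^ (p.choose 2) * B4 ^ (p.choose 3) = 1 := by
    have h := kom_pow_right B0 A0 B2 B3 B4 rfl rfl rfl hB4c h32.symm p
    rw [kom_eq_one ((hA0p B0).symm)] at h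
    exact h.symm
  have hCCp : CC ^ p = 1 := by
    have hinv : kom B2 B0 = CC⁻¹ := by
      rw [show CC⁻¹ = (kom B0 B2)⁻¹ from rfl, kom_inv]
    have hcentral : ∀ w : E, kom B2 B0 * w = w * kom B2 B0 := by
      intro w
      rw [hinv]
      have hw : Commute CC w := hCCc w
      exact hw.inv_left
    have h := kom_pow_left B2 B0 hcentral p
    have hB2pc : B2 ^ p * B0 = B0 * B2 ^ p := by
      have e1 : B2 ^ p = (B3 ^ (p.choose 2) * B4 ^ (p.choose 3))⁻¹ := by
        rw [eq_inv_iff_mul_eq_one, ← mul_assoc]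
        exact hB2p
      have c3 : Commute B0 (B3 ^ (p.choose 2)) := by
        have : Commute B0 B3 := h31.symm
        exact this.pow_right _
      have c4 : Commute B0 (B4 ^ (p.choose 3)) := by
        have : Commute B0 B4 := (hB4c B0).symm
        exact this.pow_right _
      have : Commute B0 (B2 ^ p) := by
        rw [e1]
        exact (c3.mul_right c4).inv_right
      exact this.symm
    rw [kom_eq_one hB2pc, hinv, inv_pow] at h
    rw [← inv_inv (CC ^ p), ← h, inv_one]
  -- choose the central corrections by divisibility
  have hpQ : (p : ℚ) ≠ 0 := by
    have : p ≠ 0 := by omega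
    exact_mod_cast this
  have hA0pg : (A0 ^ p).g = 1 := by rw [powg A0 p, show A0.g = oa from rfl, gpa]
  have hA0pz := fst_one_eq_zeta f hf (A0 ^ p) hA0pg
  obtain ⟨va, hva⟩ := qz_div p hpQ (- ((A0 ^ p).u + f 1 1))
  let A : E := zeta f hf va * A0
  have hAp : A ^ p = 1 := by
    rw [show A = zeta f hf va * A0 from rfl, zeta_mul_pow, hA0pz, ← zeta_add, hva]
    rw [neg_add_cancel, zeta_zero]
  let W : E := B0 ^ p * B2 ^ (p.choose 2) * B3 ^ (p.choose 3) * B4 ^ (p.choose 4)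
  have hWg : W.g = 1 := by
    have : W.g = oa1 ^ p * oa2 ^ (p.choose 2) * oa3 ^ (p.choose 3) * oa4 ^ (p.choose 4) := by
      rw [show W.g = pi W from rfl]
      rw [show (W : E) = B0 ^ p * B2 ^ (p.choose 2) * B3 ^ (p.choose 3) * B4 ^ (p.choose 4) from rfl]
      rw [_root_.map_mul pi, _root_.map_mul pi, _root_.map_mul pi, _root_.map_pow pi, _root_.map_pow pi, _root_.map_pow pi, _root_.map_pow pi]
      rw [show pi B0 = oa1 from rfl, show pi B2 = B2.g from rfl, hB2g,
        show pi B3 = B3.g from rfl, hB3g, show pi B4 = B4.g from rfl, hB4g]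
    rw [this, gr18]
  have hWz := fst_one_eq_zeta f hf W hWg
  obtain ⟨v1, hv1⟩ := qz_div p hpQ (- (W.u + f 1 1))
  let B : E := zeta f hf v1 * B0
  -- dropping central corrections inside commutators
  have dropA : ∀ X : E, kom X A = kom X A0 :=
    fun X => kom_central_right (zeta_central f hf va) X A0
  have dropB : ∀ Y : E, kom B Y = kom B0 Y :=
    fun Y => kom_central_left (zeta_central f hf v1) B0 Y
  have hAg : A.g = oa := by
    rw [show A.g = (1 : PresentedGroup (rels p)) * oa from rfl, one_mul]
  have hBg : B.g = oa1 := by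
    rw [show B.g = (1 : PresentedGroup (rels p)) * oa1 from rfl, one_mul]
  -- the lifting map on generators
  let F : Gen → E := fun x => match x with
    | .a => A | .a1 => B | .a2 => B2 | .a3 => B3 | .a4 => B4 | .g => CC
  have hFg : ∀ j : Gen, (F j).g = PresentedGroup.of (rels := rels p) j := by
    intro j
    cases j with
    | a => exact hAg
    | a1 => exact hBg
    | a2 => exact hB2g
    | a3 => exact hB3g
    | a4 => exact hB4g
    | g => exact hCCg
  -- commutation of lifts for trivial-commutator relators
  have liftcomm : ∀ (x y : Gen), (PresentedGroup.of (rels := rels p) x) * PresentedGroup.of y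
      = PresentedGroup.of y * PresentedGroup.of x → kom (F x) (F y) = 1 := by
    intro x y h
    refine kom_eq_one (K (F x) (F y) ?_)
    rw [hFg x, hFg y]
    exact h
  -- all relators are killed
  have hrel : ∀ r ∈ rels p, FreeGroup.lift F r = 1 := by
    intro r hr
    simp only [rels, Set.mem_insert_iff, Set.mem_singleton_iff] at hr
    have liftc : ∀ x y : Gen, FreeGroup.lift F (c (FreeGroup.of x) (FreeGroup.of y))
        = kom (F x) (F y) := by
      intro x y
      simp [c, kom, _root_.map_mul, _root_.map_inv]
    rcases hr with rfl|rfl|rfl|rfl|rfl|rfl|rfl|rfl|rfl|rfl|rfl|rfl|rfl|rfl|rfl|rfl|rfl|rfl|rfl|rfl|rfl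
    · rw [_root_.map_mul (FreeGroup.lift F), _root_.map_inv (FreeGroup.lift F), liftc, FreeGroup.lift_apply_of]
      rw [show F Gen.a1 = B from rfl, show F Gen.a = A from rfl, show F Gen.a2 = B2 from rfl]
      rw [dropB, dropA, mul_inv_cancel]
    · rw [_root_.map_mul (FreeGroup.lift F), _root_.map_inv (FreeGroup.lift F), liftc, FreeGroup.lift_apply_of]
      rw [show F Gen.a2 = B2 from rfl, show F Gen.a = A from rfl, show F Gen.a3 = B3 from rfl]
      rw [dropA, mul_inv_cancel]
    · rw [_root_.map_mul (FreeGroup.lift F), _root_.map_inv (FreeGroup.lift F), liftc, FreeGroup.lift_apply_of]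
      rw [show F Gen.a3 = B3 from rfl, show F Gen.a = A from rfl, show F Gen.a4 = B4 from rfl]
      rw [dropA, mul_inv_cancel]
    · rw [_root_.map_mul (FreeGroup.lift F), _root_.map_inv (FreeGroup.lift F), liftc, FreeGroup.lift_apply_of]
      rw [show F Gen.a1 = B from rfl, show F Gen.a2 = B2 from rfl, show F Gen.g = CC from rfl]
      rw [dropB, mul_inv_cancel]
    · rw [liftc]; exact liftcomm _ _ gc5
    · rw [liftc]; exact liftcomm _ _ gc6
    · rw [liftc]; exact liftcomm _ _ gc7
    · rw [liftc]; exact liftcomm _ _ gc8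
    · rw [liftc]; exact liftcomm _ _ gc9
    · rw [liftc]; exact liftcomm _ _ gc10
    · rw [liftc]; exact liftcomm _ _ gc11
    · rw [liftc]; exact liftcomm _ _ gc12
    · rw [liftc]; exact liftcomm _ _ gc13
    · rw [liftc]; exact liftcomm _ _ gc14
    · rw [liftc]; exact liftcomm _ _ gc15
    · rw [_root_.map_pow (FreeGroup.lift F), FreeGroup.lift_apply_of, show F Gen.a = A from rfl]; exact hAp
    · rw [_root_.map_pow (FreeGroup.lift F), FreeGroup.lift_apply_of, show F Gen.g = CC from rfl]; exact hCCp
    · rw [_root_.map_mul (FreeGroup.lift F), _root_.map_mul (FreeGroup.lift F), _root_.map_mul (FreeGroup.lift F),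
        _root_.map_pow (FreeGroup.lift F), _root_.map_pow (FreeGroup.lift F), _root_.map_pow (FreeGroup.lift F),
        _root_.map_pow (FreeGroup.lift F),
        FreeGroup.lift_apply_of, FreeGroup.lift_apply_of, FreeGroup.lift_apply_of, FreeGroup.lift_apply_of]
      rw [show F Gen.a1 = B from rfl, show F Gen.a2 = B2 from rfl,
        show F Gen.a3 = B3 from rfl, show F Gen.a4 = B4 from rfl]
      rw [show B = zeta f hf v1 * B0 from rfl, zeta_mul_pow]
      have hassoc : zeta f hf (p • v1) * B0 ^ p * B2 ^ (p.choose 2) * B3 ^ (p.choose 3)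
          * B4 ^ (p.choose 4) = zeta f hf (p • v1) * W := by
        rw [show W = B0 ^ p * B2 ^ (p.choose 2) * B3 ^ (p.choose 3) * B4 ^ (p.choose 4) from rfl]
        simp only [mul_assoc]
      rw [hassoc]
      rw [hWz, ← zeta_add, hv1, neg_add_cancel, zeta_zero]
    · rw [_root_.map_mul (FreeGroup.lift F), _root_.map_mul (FreeGroup.lift F),
        _root_.map_pow (FreeGroup.lift F), _root_.map_pow (FreeGroup.lift F), _root_.map_pow (FreeGroup.lift F),
        FreeGroup.lift_apply_of, FreeGroup.lift_apply_of, FreeGroup.lift_apply_of]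
      exact hB2p
    · rw [_root_.map_mul (FreeGroup.lift F), _root_.map_pow (FreeGroup.lift F), _root_.map_pow (FreeGroup.lift F),
        FreeGroup.lift_apply_of, FreeGroup.lift_apply_of]
      exact hB3p
    · rw [_root_.map_pow (FreeGroup.lift F), FreeGroup.lift_apply_of]
      exact hB4p
  -- the homomorphic section
  let s : PresentedGroup (rels p) →* E := PresentedGroup.toGroup hrel
  have hsec : ∀ x : PresentedGroup (rels p), (s x).g = x := by
    have hcomp : pi.comp s = MonoidHom.id (PresentedGroup (rels p)) := by
      refine PresentedGroup.ext ?_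
      intro x
      rw [MonoidHom.comp_apply, MonoidHom.id_apply]
      rw [show s (PresentedGroup.of x) = F x from PresentedGroup.toGroup.of hrel]
      exact hFg x
    intro x
    have := DFunLike.congr_fun hcomp x
    rw [MonoidHom.comp_apply, MonoidHom.id_apply] at this
    exact this
  -- extract the coboundary
  refine ⟨fun x => - (s x).u, ?_⟩
  intro x y
  have hm : s (x * y) = s x * s y := map_mul s x y
  have hu : (s (x * y)).u = (s x).u + (s y).u + f (s x).g (s y).g := by
    rw [hm]; rfl
  rw [hsec x, hsec y] at hu
  rw [← sub_eq_zero, show f x y - (-(s y).u - -(s (x*y)).u + -(s x).u)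
    = f x y - ((s (x*y)).u - (s x).u - (s y).u) from by abel, hu]
  abel

end Stmt3
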